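/- arXiv:2403.15883 — 3 statements merged into one kernel-verified Lean document; each statement's English description precedes it below -/
import Mathlib

section
/- Willems' fundamental lemma (Theorem 1): Let (A,B,C,D) define a discrete-time LTI system with A ∈ ℝ^{n×n}, B ∈ ℝ^{n×m}, C ∈ ℝ^{p×n}, D ∈ ℝ^{p×m}, with the pair (A,B) controllable and the pair (A,C) observable. Let (u^d, y^d) be an input–output trajectory of the system of length N₀, and assume u^d is persistently exciting of order L+n. Then a pair of sequences (ū, ȳ) of length L is an input–output trajectory of the system if and only if there exists α ∈ ℝ^{N₀−L+1} such that H_L(u^d) α = ū and H_L(y^d) α = ȳ (with ū, ȳ stacked as column vectors in ℝ^{mL} and ℝ^{pL}). -/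
open Matrix

/-- Block Hankel matrix of depth `L` built from the first `N₀` samples of an
`ℝ^m`-valued signal `u`, with `(i, j)` block entry `u (i + j)`. -/
def hankelMat (m L N₀ : ℕ) (u : ℕ → Fin m → ℝ) :
    Matrix (Fin L × Fin m) (Fin (N₀ - L + 1)) ℝ :=
  Matrix.of fun ir j => u ((ir.1 : ℕ) + (j : ℕ)) ir.2

/-- `u` is persistently exciting of order `L` (given data length `N₀`) if its
depth-`L` block Hankel matrix has full row rank `m * L`. -/
def PersistentlyExciting (m L N₀ : ℕ) (u : ℕ → Fin m → ℝ) : Prop :=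
  (hankelMat m L N₀ u).rank = m * L

/-- Controllability matrix `[B, A B, …, A^{n-1} B]`. -/
def ctrbMat {n m : ℕ} (A : Matrix (Fin n) (Fin n) ℝ) (B : Matrix (Fin n) (Fin m) ℝ) :
    Matrix (Fin n) (Fin n × Fin m) ℝ :=
  Matrix.of fun i kj => (A ^ (kj.1 : ℕ) * B) i kj.2

/-- The pair `(A, B)` is controllable. -/
def Controllable {n m : ℕ} (A : Matrix (Fin n) (Fin n) ℝ)
    (B : Matrix (Fin n) (Fin m) ℝ) : Prop :=
  (ctrbMat A B).rank = n

/-- Observability matrix `O_l(A, C) = [C; C A; …; C A^{l-1}]`. -/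
def obsMat {n p : ℕ} (A : Matrix (Fin n) (Fin n) ℝ) (C : Matrix (Fin p) (Fin n) ℝ)
    (l : ℕ) : Matrix (Fin l × Fin p) (Fin n) ℝ :=
  Matrix.of fun ki j => (C * A ^ (ki.1 : ℕ)) ki.2 j

/-- The pair `(A, C)` is observable. -/
def Observable {n p : ℕ} (A : Matrix (Fin n) (Fin n) ℝ)
    (C : Matrix (Fin p) (Fin n) ℝ) : Prop :=
  (obsMat A C n).rank = n

/-- `(u, y)` (restricted to its first `L` samples) is an input–output trajectory of
the LTI system `(A, B, C, D)`: there is an internal state sequence realizing it. -/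
def IsIOTraj {n m p : ℕ} (A : Matrix (Fin n) (Fin n) ℝ) (B : Matrix (Fin n) (Fin m) ℝ)
    (C : Matrix (Fin p) (Fin n) ℝ) (D : Matrix (Fin p) (Fin m) ℝ) (L : ℕ)
    (u : ℕ → Fin m → ℝ) (y : ℕ → Fin p → ℝ) : Prop :=
  ∃ x : ℕ → Fin n → ℝ, ∀ k < L,
    x (k + 1) = A.mulVec (x k) + B.mulVec (u k) ∧
    y k = C.mulVec (x k) + D.mulVec (u k)

lemma vecMul_eq_zero_of_rank {ρ κ : Type*} [Fintype ρ] [Fintype κ] [DecidableEq ρ] [DecidableEq κ]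
    (M : Matrix ρ κ ℝ) (h : M.rank = Fintype.card ρ) :
    ∀ v : ρ → ℝ, M.vecMul v = 0 → v = 0 := by
  intro v hv
  have hr : Mᵀ.rank = Fintype.card ρ := by rw [Matrix.rank_transpose]; exact h
  have hker : LinearMap.ker Mᵀ.mulVecLin = ⊥ := by
    have := Mᵀ.mulVecLin.finrank_range_add_finrank_ker
    rw [show Module.finrank ℝ (ρ → ℝ) = Fintype.card ρ from Module.finrank_pi ℝ, ← hr] at this
    have h0 : Module.finrank ℝ (LinearMap.ker Mᵀ.mulVecLin) = 0 := by
      have : Mᵀ.rank = Module.finrank ℝ (LinearMap.range Mᵀ.mulVecLin) := rfl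
      omega
    exact Submodule.finrank_eq_zero.mp h0
  have h1 : Mᵀ.mulVecLin v = 0 := by
    simpa [Matrix.mulVecLin_apply, Matrix.mulVec_transpose] using hv
  exact LinearMap.ker_eq_bot.mp hker (by simpa using h1 : Mᵀ.mulVecLin v = Mᵀ.mulVecLin 0)

lemma mulVec_surjective_of_vecMul_ker {ρ κ : Type*} [Fintype ρ] [Fintype κ] [DecidableEq ρ] [DecidableEq κ]
    (M : Matrix ρ κ ℝ) (h : ∀ v : ρ → ℝ, M.vecMul v = 0 → v = 0) :
    Function.Surjective M.mulVec := by
  have hinj : Function.Injective Mᵀ.mulVecLin := by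
    rw [← LinearMap.ker_eq_bot]
    refine LinearMap.ker_eq_bot'.mpr fun v hv => h v ?_
    simpa [Matrix.mulVecLin_apply, Matrix.mulVec_transpose] using hv
  have hr : Mᵀ.rank = Fintype.card ρ := by
    have := Mᵀ.mulVecLin.finrank_range_add_finrank_ker
    rw [LinearMap.ker_eq_bot.mpr hinj] at this
    simp only [finrank_bot, add_zero, Module.finrank_pi] at this
    exact this
  have hM : M.rank = Fintype.card ρ := by rw [← Matrix.rank_transpose]; exact hr
  have htop : LinearMap.range M.mulVecLin = ⊤ := by
    apply Submodule.eq_top_of_finrank_eq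
    rw [Module.finrank_pi]; exact hM
  intro b
  obtain ⟨a, ha⟩ := LinearMap.range_eq_top.mp htop b
  exact ⟨a, ha⟩

lemma CH_coeffs {n : ℕ} (A : Matrix (Fin n) (Fin n) ℝ) :
    ∃ c : ℕ → ℝ, c n = 1 ∧ ∑ t ∈ Finset.range (n + 1), c t • A ^ t = 0 := by
  refine ⟨fun t => A.charpoly.coeff t, ?_, ?_⟩
  · have h2 : A.charpoly.natDegree = n := by
      simpa using A.charpoly_natDegree_eq_dim
    have h3 := A.charpoly_monic.coeff_natDegree
    rw [h2] at h3
    exact h3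
  · have h2 : A.charpoly.natDegree = n := by
      simpa using A.charpoly_natDegree_eq_dim
    have := A.aeval_self_charpoly
    rw [Polynomial.aeval_eq_sum_range' (n := n + 1) (by omega)] at this
    simpa using this

lemma dot_mulVec_smul_sum {n : ℕ} {ι : Type*} (s : Finset ι) (c : ι → ℝ)
    (f : ι → Matrix (Fin n) (Fin n) ℝ) (ξ x : Fin n → ℝ) :
    ∑ t ∈ s, c t * (ξ ⬝ᵥ (f t *ᵥ x)) = ξ ⬝ᵥ ((∑ t ∈ s, c t • f t) *ᵥ x) := by
  classical
  induction s using Finset.induction with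
  | empty => simp [Matrix.zero_mulVec]
  | insert a s h ih =>
    rw [Finset.sum_insert h, Finset.sum_insert h, Matrix.add_mulVec, dotProduct_add, ih,
      Matrix.smul_mulVec, dotProduct_smul, smul_eq_mul]

lemma helper_mulVec {q w K : Type*} [Fintype w] [Fintype K] (M : Matrix q w ℝ) (α : K → ℝ)
    (g : K → w → ℝ) (i : q) :
    M.mulVec (fun l => ∑ j, α j * g j l) i = ∑ j, α j * M.mulVec (g j) i := by
  simp only [Matrix.mulVec, dotProduct, Finset.mul_sum]
  rw [Finset.sum_comm]
  exact Finset.sum_congr rfl fun j _ => Finset.sum_congr rfl fun l _ => by ring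

lemma kernel_lemma {n m : ℕ}
    (A : Matrix (Fin n) (Fin n) ℝ) (B : Matrix (Fin n) (Fin m) ℝ)
    (hctrb : Controllable A B)
    (N₀ L : ℕ) (hLN : L + n ≤ N₀)
    (ud : ℕ → Fin m → ℝ) (xd : ℕ → Fin n → ℝ)
    (hx : ∀ k < N₀, xd (k + 1) = A.mulVec (xd k) + B.mulVec (ud k))
    (hPE : PersistentlyExciting m (L + n) N₀ ud)
    (v : Fin n ⊕ (Fin L × Fin m) → ℝ)
    (hv : ∀ j : Fin (N₀ - L + 1),
      (∑ i : Fin n, v (Sum.inl i) * xd (j : ℕ) i)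
        + ∑ kr : Fin L × Fin m, v (Sum.inr kr) * ud ((kr.1 : ℕ) + (j : ℕ)) kr.2 = 0) :
    v = 0 := by
  classical
  set ξ : Fin n → ℝ := fun i => v (Sum.inl i) with hξdef
  set η : ℕ → Fin m → ℝ := fun k r => if h : k < L then v (Sum.inr (⟨k, h⟩, r)) else 0 with hηdef
  -- base identity
  have hbase : ∀ j : ℕ, j + L ≤ N₀ →
      (ξ ⬝ᵥ xd j) + ∑ k ∈ Finset.range L, ∑ r : Fin m, η k r * ud (k + j) r = 0 := by
    intro j hj
    have hj' : j < N₀ - L + 1 := by omega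
    have h0 := hv ⟨j, hj'⟩
    have e1 : ∑ kr : Fin L × Fin m, v (Sum.inr kr) * ud ((kr.1 : ℕ) + j) kr.2
        = ∑ k ∈ Finset.range L, ∑ r : Fin m, η k r * ud (k + j) r := by
      rw [Fintype.sum_prod_type]
      rw [← Fin.sum_univ_eq_sum_range (fun k => ∑ r : Fin m, η k r * ud (k + j) r) L]
      refine Finset.sum_congr rfl fun k _ => Finset.sum_congr rfl fun r _ => ?_
      simp [hηdef, k.isLt]
    rw [show (ξ ⬝ᵥ xd j) = ∑ i : Fin n, v (Sum.inl i) * xd j i from rfl, ← e1]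
    exact h0
  -- iterated identity
  have hstep : ∀ t j, j + t + L ≤ N₀ →
      (ξ ⬝ᵥ ((A ^ t) *ᵥ xd j))
        + (∑ s ∈ Finset.range t, ξ ⬝ᵥ ((A ^ (t - 1 - s) * B) *ᵥ ud (j + s)))
        + ∑ k ∈ Finset.range L, ∑ r : Fin m, η k r * ud (k + t + j) r = 0 := by
    intro t
    induction t with
    | zero =>
      intro j hj
      simpa [Matrix.one_mulVec] using hbase j (by omega)
    | succ t ih =>
      intro j hj
      have h1 := ih (j + 1) (by omega)
      have hx' := hx j (by omega)
      have hψ : ξ ⬝ᵥ ((A ^ t) *ᵥ xd (j + 1))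
          = ξ ⬝ᵥ ((A ^ (t + 1)) *ᵥ xd j) + ξ ⬝ᵥ ((A ^ t * B) *ᵥ ud j) := by
        rw [hx', Matrix.mulVec_add, dotProduct_add, Matrix.mulVec_mulVec, Matrix.mulVec_mulVec,
          ← pow_succ]
      have h2 : ∑ s ∈ Finset.range (t + 1), ξ ⬝ᵥ ((A ^ (t + 1 - 1 - s) * B) *ᵥ ud (j + s))
          = (∑ s ∈ Finset.range t, ξ ⬝ᵥ ((A ^ (t - 1 - s) * B) *ᵥ ud (j + 1 + s)))
            + ξ ⬝ᵥ ((A ^ t * B) *ᵥ ud j) := by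
        rw [Finset.sum_range_succ']
        congr 1
        · refine Finset.sum_congr rfl fun s hs => ?_
          have e1 : t + 1 - 1 - (s + 1) = t - 1 - s := by omega
          have e2 : j + (s + 1) = j + 1 + s := by omega
          rw [e1, e2]
      have h3 : ∑ k ∈ Finset.range L, ∑ r : Fin m, η k r * ud (k + (t + 1) + j) r
          = ∑ k ∈ Finset.range L, ∑ r : Fin m, η k r * ud (k + t + (j + 1)) r := by
        refine Finset.sum_congr rfl fun k _ => Finset.sum_congr rfl fun r _ => ?_
        rw [show k + (t + 1) + j = k + t + (j + 1) by omega]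
      rw [h2, h3]
      rw [hψ] at h1
      linarith [h1]
  obtain ⟨c, hcn, hCH⟩ := CH_coeffs A
  set w : ℕ → ℕ → Fin m → ℝ := fun t s r =>
    if s < t then (Matrix.vecMul ξ (A ^ (t - 1 - s) * B)) r else η (s - t) r with hwdef
  set ζ : Fin (L + n) × Fin m → ℝ :=
    fun sr => ∑ t ∈ Finset.range (n + 1), c t * w t (sr.1 : ℕ) sr.2 with hζdef
  have hwsum : ∀ t ≤ n, ∀ j : ℕ, j + (L + n) ≤ N₀ →
      ∑ s ∈ Finset.range (L + n), ∑ r : Fin m, w t s r * ud (s + j) r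
        = -(ξ ⬝ᵥ ((A ^ t) *ᵥ xd j)) := by
    intro t ht j hj
    have h1 := hstep t j (by omega)
    set f : ℕ → ℝ := fun s => ∑ r : Fin m, w t s r * ud (s + j) r with hfdef
    have hsplit : ∑ s ∈ Finset.range (L + n), f s
        = ((∑ s ∈ Finset.Ico 0 t, f s) + ∑ s ∈ Finset.Ico t (t + L), f s)
          + ∑ s ∈ Finset.Ico (t + L) (L + n), f s := by
      rw [Finset.range_eq_Ico, ← Finset.sum_Ico_consecutive f (by omega : 0 ≤ t + L)
        (by omega : t + L ≤ L + n), ← Finset.sum_Ico_consecutive f (by omega : 0 ≤ t)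
        (by omega : t ≤ t + L)]
    have hp1 : ∑ s ∈ Finset.Ico 0 t, f s
        = ∑ s ∈ Finset.range t, ξ ⬝ᵥ ((A ^ (t - 1 - s) * B) *ᵥ ud (j + s)) := by
      rw [← Finset.range_eq_Ico]
      refine Finset.sum_congr rfl fun s hs => ?_
      have hst : s < t := Finset.mem_range.mp hs
      have : ∀ r : Fin m, w t s r = (Matrix.vecMul ξ (A ^ (t - 1 - s) * B)) r :=
        fun r => if_pos hst
      simp only [hfdef, this]
      rw [show s + j = j + s by omega, Matrix.dotProduct_mulVec]
      rfl
    have hp2 : ∑ s ∈ Finset.Ico t (t + L), f s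
        = ∑ k ∈ Finset.range L, ∑ r : Fin m, η k r * ud (k + t + j) r := by
      rw [Finset.sum_Ico_eq_sum_range]
      rw [show t + L - t = L by omega]
      refine Finset.sum_congr rfl fun k hk => ?_
      refine Finset.sum_congr rfl fun r _ => ?_
      have hw1 : w t (t + k) r = η k r := by
        rw [hwdef]
        simp only [show ¬(t + k < t) by omega, if_false]
        rw [show t + k - t = k by omega]
      rw [hw1, show t + k + j = k + t + j by omega]
    have hp3 : ∑ s ∈ Finset.Ico (t + L) (L + n), f s = 0 := by
      refine Finset.sum_eq_zero fun s hs => ?_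
      obtain ⟨hs1, hs2⟩ := Finset.mem_Ico.mp hs
      refine Finset.sum_eq_zero fun r _ => ?_
      have hw1 : w t s r = 0 := by
        rw [hwdef]
        simp only [show ¬(s < t) by omega, if_false]
        rw [hηdef]
        simp only [show ¬(s - t < L) by omega, dif_neg, not_false_iff]
      rw [hw1, zero_mul]
    rw [hsplit, hp1, hp2, hp3]
    linarith [h1]
  have hζ0 : ζ = 0 := by
    apply vecMul_eq_zero_of_rank (hankelMat m (L + n) N₀ ud)
    · rw [hPE]
      simp [Fintype.card_prod, Fintype.card_fin, mul_comm]
    · funext j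
      have hjn : (j : ℕ) + (L + n) ≤ N₀ := by
        have := j.isLt
        omega
      show ∑ sr : Fin (L + n) × Fin m, ζ sr * hankelMat m (L + n) N₀ ud sr j = 0
      calc ∑ sr : Fin (L + n) × Fin m, ζ sr * hankelMat m (L + n) N₀ ud sr j
          = ∑ s : Fin (L + n), ∑ r : Fin m,
              ∑ t ∈ Finset.range (n + 1), c t * (w t (s : ℕ) r * ud ((s : ℕ) + j) r) := by
            rw [Fintype.sum_prod_type]
            refine Finset.sum_congr rfl fun s _ => Finset.sum_congr rfl fun r _ => ?_
            rw [hζdef]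
            simp only [hankelMat, Matrix.of_apply]
            rw [Finset.sum_mul]
            exact Finset.sum_congr rfl fun t _ => by ring
        _ = ∑ t ∈ Finset.range (n + 1), c t *
              ∑ s ∈ Finset.range (L + n), ∑ r : Fin m, w t s r * ud (s + j) r := by
            have e : ∀ s : ℕ, ∑ r : Fin m, ∑ t ∈ Finset.range (n + 1),
                c t * (w t s r * ud (s + (j : ℕ)) r)
                = ∑ t ∈ Finset.range (n + 1), c t * ∑ r : Fin m, w t s r * ud (s + (j : ℕ)) r := by
              intro s
              rw [Finset.sum_comm]
              exact Finset.sum_congr rfl fun t _ => by rw [Finset.mul_sum]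
            simp_rw [e]
            rw [Fin.sum_univ_eq_sum_range (fun s => ∑ t ∈ Finset.range (n + 1),
              c t * ∑ r : Fin m, w t s r * ud (s + (j : ℕ)) r) (L + n)]
            rw [Finset.sum_comm]
            exact Finset.sum_congr rfl fun t _ => by rw [Finset.mul_sum]
        _ = ∑ t ∈ Finset.range (n + 1), c t * -(ξ ⬝ᵥ ((A ^ t) *ᵥ xd j)) := by
            refine Finset.sum_congr rfl fun t ht => ?_
            rw [hwsum t (by exact Nat.lt_succ_iff.mp (Finset.mem_range.mp ht)) j hjn]
        _ = -(∑ t ∈ Finset.range (n + 1), c t * (ξ ⬝ᵥ ((A ^ t) *ᵥ xd j))) := by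
            rw [← Finset.sum_neg_distrib]
            exact Finset.sum_congr rfl fun t _ => by ring
        _ = 0 := by
            rw [dot_mulVec_smul_sum, hCH, Matrix.zero_mulVec, dotProduct_zero, neg_zero]
  have hζeq : ∀ (s : ℕ) (hs : s < L + n) (r : Fin m),
      ∑ t ∈ Finset.range (n + 1), c t * w t s r = 0 := by
    intro s hs r
    have := congrFun hζ0 (⟨s, hs⟩, r)
    simpa [hζdef] using this
  have hη0 : ∀ k r, η k r = 0 := by
    have key : ∀ d : ℕ, ∀ k, L ≤ k + d + 1 → ∀ r, η k r = 0 := by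
      intro d
      induction d using Nat.strong_induction_on with
      | _ d ih =>
        intro k hk r
        by_cases hkL : k < L
        · have hs : n + k < L + n := by omega
          have h0 := hζeq (n + k) hs r
          rw [Finset.sum_range_succ] at h0
          have hwn : w n (n + k) r = η k r := by
            rw [hwdef]
            simp only [show ¬(n + k < n) by omega, if_false]
            rw [show n + k - n = k by omega]
          have hothers : ∀ t ∈ Finset.range n, c t * w t (n + k) r = 0 := by
            intro t ht
            have ht' : t < n := Finset.mem_range.mp ht
            have hwt : w t (n + k) r = η (n + k - t) r := by
              rw [hwdef]
              simp only [show ¬(n + k < t) by omega, if_false]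
            by_cases hk'L : n + k - t < L
            · have hd1 : 1 ≤ d := by omega
              rw [hwt, ih (d - 1) (by omega) (n + k - t) (by omega) r, mul_zero]
            · rw [hwt, hηdef]
              simp only [dif_neg hk'L, mul_zero]
          rw [Finset.sum_eq_zero hothers, hwn, hcn, zero_add, one_mul] at h0
          exact h0
        · rw [hηdef]
          simp only [dif_neg hkL]
    intro k r
    exact key L k (by omega) r
  have hξA : ∀ k, k < n → ∀ r, Matrix.vecMul ξ (A ^ k * B) r = 0 := by
    intro k
    induction k using Nat.strong_induction_on with
    | _ k ih =>
      intro hk r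
      have hs : n - 1 - k < L + n := by omega
      have h0 := hζeq (n - 1 - k) hs r
      rw [Finset.sum_range_succ] at h0
      have hwn : w n (n - 1 - k) r = Matrix.vecMul ξ (A ^ k * B) r := by
        rw [hwdef]
        simp only [show n - 1 - k < n by omega, if_true]
        rw [show n - 1 - (n - 1 - k) = k by omega]
      have hothers : ∀ t ∈ Finset.range n, c t * w t (n - 1 - k) r = 0 := by
        intro t ht
        have ht' : t < n := Finset.mem_range.mp ht
        by_cases hst : n - 1 - k < t
        · have hwt : w t (n - 1 - k) r = Matrix.vecMul ξ (A ^ (t - 1 - (n - 1 - k)) * B) r := by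
            rw [hwdef]
            simp only [if_pos hst]
          rw [hwt, ih (t - 1 - (n - 1 - k)) (by omega) (by omega) r, mul_zero]
        · have hwt : w t (n - 1 - k) r = η (n - 1 - k - t) r := by
            rw [hwdef]
            simp only [if_neg hst]
          rw [hwt, hη0, mul_zero]
      rw [Finset.sum_eq_zero hothers, hwn, hcn, zero_add, one_mul] at h0
      exact h0
  have hξ0 : ξ = 0 := by
    apply vecMul_eq_zero_of_rank (ctrbMat A B)
    · rw [hctrb]
      simp [Fintype.card_fin]
    · funext tr
      obtain ⟨t, r⟩ := tr
      have h1 := hξA (t : ℕ) t.isLt r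
      show Matrix.vecMul ξ (ctrbMat A B) (t, r) = 0
      rw [← h1]
      simp only [Matrix.vecMul, dotProduct, ctrbMat, Matrix.of_apply]
  funext i
  cases i with
  | inl i =>
    have := congrFun hξ0 i
    simpa [hξdef] using this
  | inr kr =>
    obtain ⟨k, r⟩ := kr
    have := hη0 (k : ℕ) r
    rw [hηdef] at this
    simp only [k.isLt, dif_pos, Fin.eta] at this
    simpa using this

lemma combo_props {n m p : ℕ}
    (A : Matrix (Fin n) (Fin n) ℝ) (B : Matrix (Fin n) (Fin m) ℝ)
    (C : Matrix (Fin p) (Fin n) ℝ) (D : Matrix (Fin p) (Fin m) ℝ)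
    (N₀ L : ℕ) (hLN : L ≤ N₀)
    (ud : ℕ → Fin m → ℝ) (yd : ℕ → Fin p → ℝ) (xd : ℕ → Fin n → ℝ)
    (hxd : ∀ k < N₀, xd (k + 1) = A.mulVec (xd k) + B.mulVec (ud k) ∧
      yd k = C.mulVec (xd k) + D.mulVec (ud k))
    (α : Fin (N₀ - L + 1) → ℝ) (k : ℕ) (hk : k < L) :
    ((fun i => ∑ j, α j * xd (k + 1 + (j : ℕ)) i)
        = A.mulVec (fun i => ∑ j, α j * xd (k + (j : ℕ)) i)
          + B.mulVec (fun r => ∑ j, α j * ud (k + (j : ℕ)) r))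
    ∧ ((fun r => ∑ j, α j * yd (k + (j : ℕ)) r)
        = C.mulVec (fun i => ∑ j, α j * xd (k + (j : ℕ)) i)
          + D.mulVec (fun r => ∑ j, α j * ud (k + (j : ℕ)) r)) := by
  have hjN : ∀ j : Fin (N₀ - L + 1), k + (j : ℕ) < N₀ := by
    intro j
    have := j.isLt
    omega
  constructor
  · funext i
    calc ∑ j, α j * xd (k + 1 + (j : ℕ)) i
        = ∑ j : Fin (N₀ - L + 1), α j *
            ((A.mulVec (xd (k + (j : ℕ))) + B.mulVec (ud (k + (j : ℕ)))) i) := by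
          refine Finset.sum_congr rfl fun j _ => ?_
          rw [show k + 1 + (j : ℕ) = k + (j : ℕ) + 1 by omega, (hxd (k + (j : ℕ)) (hjN j)).1]
      _ = (∑ j : Fin (N₀ - L + 1), α j * A.mulVec (xd (k + (j : ℕ))) i)
            + ∑ j : Fin (N₀ - L + 1), α j * B.mulVec (ud (k + (j : ℕ))) i := by
          rw [← Finset.sum_add_distrib]
          refine Finset.sum_congr rfl fun j _ => ?_
          simp only [Pi.add_apply]
          ring
      _ = (A.mulVec (fun i' => ∑ j, α j * xd (k + (j : ℕ)) i')
            + B.mulVec (fun r => ∑ j, α j * ud (k + (j : ℕ)) r)) i := by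
          rw [Pi.add_apply, helper_mulVec, helper_mulVec]
  · funext r
    calc ∑ j, α j * yd (k + (j : ℕ)) r
        = ∑ j : Fin (N₀ - L + 1), α j *
            ((C.mulVec (xd (k + (j : ℕ))) + D.mulVec (ud (k + (j : ℕ)))) r) := by
          refine Finset.sum_congr rfl fun j _ => ?_
          rw [(hxd (k + (j : ℕ)) (hjN j)).2]
      _ = (∑ j : Fin (N₀ - L + 1), α j * C.mulVec (xd (k + (j : ℕ))) r)
            + ∑ j : Fin (N₀ - L + 1), α j * D.mulVec (ud (k + (j : ℕ))) r := by
          rw [← Finset.sum_add_distrib]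
          refine Finset.sum_congr rfl fun j _ => ?_
          simp only [Pi.add_apply]
          ring
      _ = (C.mulVec (fun i' => ∑ j, α j * xd (k + (j : ℕ)) i')
            + D.mulVec (fun r => ∑ j, α j * ud (k + (j : ℕ)) r)) r := by
          rw [Pi.add_apply, helper_mulVec, helper_mulVec]

/-- **Willems' fundamental lemma.** If `(u^d, y^d)` is a length-`N₀` input–output
trajectory of a controllable and observable LTI system `(A, B, C, D)` and `u^d` is
persistently exciting of order `L + n`, then `(ū, ȳ)` is a length-`L` input–output
trajectory of the system iff it is a linear combination `H_L(u^d) α = ū`,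
`H_L(y^d) α = ȳ` of the columns of the data Hankel matrices. -/
theorem fundamental_lemma {n m p : ℕ}
    (A : Matrix (Fin n) (Fin n) ℝ) (B : Matrix (Fin n) (Fin m) ℝ)
    (C : Matrix (Fin p) (Fin n) ℝ) (D : Matrix (Fin p) (Fin m) ℝ)
    (hctrb : Controllable A B) (hobs : Observable A C)
    (N₀ L : ℕ) (hLN : L + n ≤ N₀)
    (ud : ℕ → Fin m → ℝ) (yd : ℕ → Fin p → ℝ)
    (hdata : IsIOTraj A B C D N₀ ud yd)
    (hPE : PersistentlyExciting m (L + n) N₀ ud)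
    (ubar : ℕ → Fin m → ℝ) (ybar : ℕ → Fin p → ℝ) :
    IsIOTraj A B C D L ubar ybar ↔
      ∃ α : Fin (N₀ - L + 1) → ℝ,
        (∀ (i : Fin L) (r : Fin m), (hankelMat m L N₀ ud).mulVec α (i, r) = ubar i r) ∧
        (∀ (i : Fin L) (r : Fin p), (hankelMat p L N₀ yd).mulVec α (i, r) = ybar i r) := by
  classical
  obtain ⟨xd, hxd⟩ := hdata
  have hLN' : L ≤ N₀ := by omega
  constructor
  · rintro ⟨xb, hxb⟩
    set G : Matrix (Fin n ⊕ (Fin L × Fin m)) (Fin (N₀ - L + 1)) ℝ :=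
      Matrix.of fun i j =>
        Sum.elim (fun i' => xd (j : ℕ) i') (fun kr => ud ((kr.1 : ℕ) + (j : ℕ)) kr.2) i
      with hGdef
    have hker : ∀ v, G.vecMul v = 0 → v = 0 := by
      intro v hv
      apply kernel_lemma A B hctrb N₀ L hLN ud xd (fun k hk => (hxd k hk).1) hPE v
      intro j
      have h2 : (∑ i : Fin n ⊕ (Fin L × Fin m), v i * G i j) = 0 := congrFun hv j
      rw [Fintype.sum_sum_type] at h2
      simpa [hGdef] using h2
    obtain ⟨α, hα⟩ := mulVec_surjective_of_vecMul_ker G hker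
      (Sum.elim (fun i => xb 0 i) (fun kr => ubar (kr.1 : ℕ) kr.2))
    have hu : ∀ k, k < L → ∀ r : Fin m, (∑ j, α j * ud (k + (j : ℕ)) r) = ubar k r := by
      intro k hk r
      have h1 : (∑ j, G (Sum.inr (⟨k, hk⟩, r)) j * α j) = ubar k r :=
        congrFun hα (Sum.inr (⟨k, hk⟩, r))
      rw [← h1]
      exact Finset.sum_congr rfl fun j _ => by simp [hGdef]; ring
    set x' : ℕ → Fin n → ℝ := fun k i => ∑ j, α j * xd (k + (j : ℕ)) i with hx'def
    have hx'0 : x' 0 = xb 0 := by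
      funext i
      have h1 : (∑ j, G (Sum.inl i) j * α j) = xb 0 i := congrFun hα (Sum.inl i)
      rw [← h1]
      exact Finset.sum_congr rfl fun j _ => by simp [hGdef, hx'def]; ring
    have hkey : ∀ k, k ≤ L → x' k = xb k := by
      intro k
      induction k with
      | zero => intro _; exact hx'0
      | succ k ih =>
        intro hk1
        have hkL : k < L := by omega
        have hc := (combo_props A B C D N₀ L hLN' ud yd xd hxd α k hkL).1
        have : x' (k + 1) = A.mulVec (x' k) + B.mulVec (fun r => ∑ j, α j * ud (k + (j : ℕ)) r) := hc
        rw [this, ih (by omega), show (fun r => ∑ j, α j * ud (k + (j : ℕ)) r) = ubar k from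
          funext fun r => hu k hkL r, ← (hxb k hkL).1]
    refine ⟨α, ?_, ?_⟩
    · intro i r
      show (∑ j, hankelMat m L N₀ ud (i, r) j * α j) = ubar (i : ℕ) r
      rw [← hu (i : ℕ) i.isLt r]
      exact Finset.sum_congr rfl fun j _ => by simp [hankelMat]; ring
    · intro i r
      have hc := (combo_props A B C D N₀ L hLN' ud yd xd hxd α (i : ℕ) i.isLt).2
      show (∑ j, hankelMat p L N₀ yd (i, r) j * α j) = ybar (i : ℕ) r
      have e1 : (∑ j, hankelMat p L N₀ yd (i, r) j * α j)
          = ∑ j, α j * yd ((i : ℕ) + (j : ℕ)) r :=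
        Finset.sum_congr rfl fun j _ => by simp [hankelMat]; ring
      rw [e1, show (∑ j, α j * yd ((i : ℕ) + (j : ℕ)) r)
          = (fun r => ∑ j, α j * yd ((i : ℕ) + (j : ℕ)) r) r from rfl, hc]
      have hxk : (fun i' => ∑ j, α j * xd ((i : ℕ) + (j : ℕ)) i') = xb (i : ℕ) :=
        hkey (i : ℕ) (le_of_lt i.isLt)
      rw [hxk, show (fun r => ∑ j, α j * ud ((i : ℕ) + (j : ℕ)) r)
          = ubar (i : ℕ) from funext fun r => hu (i : ℕ) i.isLt r]
      rw [← (hxb (i : ℕ) i.isLt).2]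
  · rintro ⟨α, hαu, hαy⟩
    refine ⟨fun k i => ∑ j, α j * xd (k + (j : ℕ)) i, ?_⟩
    intro k hk
    have hu : (fun r => ∑ j, α j * ud (k + (j : ℕ)) r) = ubar k := by
      funext r
      have h1 := hαu ⟨k, hk⟩ r
      rw [← h1]
      exact (Finset.sum_congr rfl fun j _ => by simp [hankelMat]; ring).symm
    have hc := combo_props A B C D N₀ L hLN' ud yd xd hxd α k hk
    constructor
    · have h2 := hc.1
      rw [hu] at h2
      exact h2
    · have hy : (fun r => ∑ j, α j * yd (k + (j : ℕ)) r) = ybar k := by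
        funext r
        have h1 := hαy ⟨k, hk⟩ r
        rw [← h1]
        exact (Finset.sum_congr rfl fun j _ => by simp [hankelMat]; ring).symm
      have h2 := hc.2
      rw [hu] at h2
      rw [← hy]
      exact h2
end

section
/- Key rank lemma supporting the fundamental lemma: Let A ∈ ℝ^{n×n}, B ∈ ℝ^{n×m} with the pair (A,B) controllable, and let (u^d, x^d) satisfy x^d(t+1) = A x^d(t) + B u^d(t) for 0 ≤ t ≤ N₀−1. If u^d is persistently exciting of order L+n, then the stacked matrix [X₀; H_L(u^d)] ∈ ℝ^{(n+mL)×(N₀−L+1)}, where X₀ = [x^d(0) x^d(1) ⋯ x^d(N₀−L)], has full row rank n + mL. -/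
open Matrix

/-- A matrix over `ℝ` has full row rank iff its rows are linearly independent. -/
lemma rank_eq_card_iff_li {ι κ : Type*} [Fintype ι] [Fintype κ] (M : Matrix ι κ ℝ) :
    M.rank = Fintype.card ι ↔ LinearIndependent ℝ M := by
  rw [Matrix.rank_eq_finrank_span_row]
  change _ ↔ LinearIndependent ℝ M.row
  rw [linearIndependent_iff_card_eq_finrank_span, Set.finrank]
  exact eq_comm

lemma sum_smul_row {ι κ : Type*} [Fintype ι] (M : Matrix ι κ ℝ) (g : ι → ℝ) (j : κ) :
    (∑ i, g i • M i) j = ∑ i, g i * M i j := by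
  simp [Finset.sum_apply]

lemma sum_dotProduct' {m : ℕ} (s : Finset ℕ) (f : ℕ → Fin m → ℝ) (v : Fin m → ℝ) :
    (∑ k ∈ s, f k) ⬝ᵥ v = ∑ k ∈ s, f k ⬝ᵥ v := by
  simp only [dotProduct, Finset.sum_apply, Finset.sum_mul]
  rw [Finset.sum_comm]

lemma dotProduct_sum' {n : ℕ} (s : Finset ℕ) (v : Fin n → ℝ) (f : ℕ → Fin n → ℝ) :
    v ⬝ᵥ (∑ k ∈ s, f k) = ∑ k ∈ s, v ⬝ᵥ f k := by
  simp only [dotProduct, Finset.sum_apply, Finset.mul_sum]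
  rw [Finset.sum_comm]

lemma vecMul_matrix_sum {α β : Type*} [Fintype α] (ξ : α → ℝ) (s : Finset ℕ)
    (F : ℕ → Matrix α β ℝ) :
    Matrix.vecMul ξ (∑ k ∈ s, F k) = ∑ k ∈ s, Matrix.vecMul ξ (F k) := by
  ext j
  simp only [Matrix.vecMul, dotProduct, Finset.sum_apply, Matrix.sum_apply, Finset.mul_sum]
  rw [Finset.sum_comm]

lemma vecMul_matrix_smul {α β : Type*} [Fintype α] (ξ : α → ℝ) (c : ℝ) (M : Matrix α β ℝ) :
    Matrix.vecMul ξ (c • M) = c • Matrix.vecMul ξ M := by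
  ext j
  simp [Matrix.vecMul, dotProduct, Finset.mul_sum, mul_left_comm]

lemma state_expand {n m : ℕ} (A : Matrix (Fin n) (Fin n) ℝ) (B : Matrix (Fin n) (Fin m) ℝ)
    (N₀ : ℕ) (ud : ℕ → Fin m → ℝ) (xd : ℕ → Fin n → ℝ)
    (hdyn : ∀ t < N₀, xd (t + 1) = A.mulVec (xd t) + B.mulVec (ud t)) :
    ∀ k j, j + k ≤ N₀ → xd (j + k) =
      (A ^ k).mulVec (xd j)
        + ∑ s ∈ Finset.range k, ((A ^ (k - 1 - s)) * B).mulVec (ud (j + s)) := by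
  intro k
  induction k with
  | zero => intro j _; simp
  | succ k ih =>
    intro j h
    have e1 : j + (k + 1) = (j + k) + 1 := by omega
    rw [e1, hdyn (j + k) (by omega), ih j (by omega), Matrix.mulVec_add,
      Matrix.mulVec_mulVec, ← pow_succ']
    have e2 : A.mulVec (∑ s ∈ Finset.range k, ((A ^ (k - 1 - s)) * B).mulVec (ud (j + s)))
        = ∑ s ∈ Finset.range k, ((A ^ (k + 1 - 1 - s)) * B).mulVec (ud (j + s)) := by
      have := map_sum A.mulVecLin
        (fun s => ((A ^ (k - 1 - s)) * B).mulVec (ud (j + s))) (Finset.range k)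
      simp only [Matrix.mulVecLin_apply] at this
      rw [this]
      refine Finset.sum_congr rfl fun s hs => ?_
      have hs' : s < k := Finset.mem_range.mp hs
      rw [Matrix.mulVec_mulVec, ← Matrix.mul_assoc, ← pow_succ',
        show k - 1 - s + 1 = k + 1 - 1 - s by omega]
    rw [e2, Finset.sum_range_succ]
    have e3 : (A ^ (k + 1 - 1 - k)) * B = B := by norm_num
    rw [e3]
    abel

/-- **Key rank lemma supporting the fundamental lemma.** If `(A, B)` is
controllable, `(u^d, x^d)` satisfies the state recursion on `0, …, N₀ - 1`, and
`u^d` is persistently exciting of order `L + n`, then the matrix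
`[X₀; H_L(u^d)]`, where `X₀ = [x^d(0) ⋯ x^d(N₀ - L)]`, has full row rank
`n + m L`. -/
theorem state_input_full_row_rank {n m : ℕ}
    (A : Matrix (Fin n) (Fin n) ℝ) (B : Matrix (Fin n) (Fin m) ℝ)
    (hctrb : Controllable A B)
    (N₀ L : ℕ) (hLN : L + n ≤ N₀)
    (ud : ℕ → Fin m → ℝ) (xd : ℕ → Fin n → ℝ)
    (hdyn : ∀ t < N₀, xd (t + 1) = A.mulVec (xd t) + B.mulVec (ud t))
    (hPE : PersistentlyExciting m (L + n) N₀ ud) :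
    (Matrix.fromRows
        (Matrix.of fun (i : Fin n) (j : Fin (N₀ - L + 1)) => xd (j : ℕ) i)
        (hankelMat m L N₀ ud)).rank = n + m * L := by
  classical
  have hcard : n + m * L = Fintype.card (Fin n ⊕ Fin L × Fin m) := by
    simp [mul_comm]
  rw [hcard, rank_eq_card_iff_li]
  refine Fintype.linearIndependent_iff.mpr ?_
  intro g hg
  set ξ : Fin n → ℝ := fun i => g (Sum.inl i) with hξdef
  set ηf : ℕ → Fin m → ℝ :=
    fun l => if h : l < L then (fun q => g (Sum.inr (⟨l, h⟩, q))) else 0 with hηdef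
  have hηfin : ∀ (l : Fin L) (q : Fin m), ηf (l : ℕ) q = g (Sum.inr (l, q)) := by
    intro l q
    rw [hηdef]
    simp [l.isLt]
  have hηbig : ∀ l, L ≤ l → ηf l = 0 := by
    intro l hl
    rw [hηdef]
    simp [Nat.not_lt.mpr hl]
  -- base relation from the dependency of rows
  have hrel : ∀ j, j ≤ N₀ - L →
      ξ ⬝ᵥ xd j + ∑ l ∈ Finset.range L, ηf l ⬝ᵥ ud (j + l) = 0 := by
    intro j hj
    have hcol := congr_fun hg (⟨j, by omega⟩ : Fin (N₀ - L + 1))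
    simp only [Finset.sum_apply, Pi.smul_apply, smul_eq_mul, Pi.zero_apply,
      Fintype.sum_sum_type, Matrix.fromRows_apply_inl, Matrix.fromRows_apply_inr,
      Matrix.of_apply, hankelMat, Fintype.sum_prod_type] at hcol
    rw [← hcol]
    congr 1
    rw [← Fin.sum_univ_eq_sum_range]
    refine Finset.sum_congr rfl fun l _ => ?_
    simp only [dotProduct]
    refine Finset.sum_congr rfl fun q _ => ?_
    rw [hηfin l q, Nat.add_comm (j : ℕ) (l : ℕ)]
  set v : ℕ → Fin n → ℝ := fun k => Matrix.vecMul ξ (A ^ k) with hvdef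
  set w : ℕ → Fin m → ℝ := fun k => Matrix.vecMul ξ ((A ^ k) * B) with hwdef
  set c : ℕ → ℝ := fun k => (Matrix.charpoly A).coeff k with hcdef
  set relK : ℕ → ℕ → Fin m → ℝ :=
    fun k r => if r < k then w (k - 1 - r) else ηf (r - k) with hrelKdef
  have hrelK : ∀ k ≤ n, ∀ j, j + k ≤ N₀ - L →
      v k ⬝ᵥ xd j + ∑ r ∈ Finset.range (k + L), relK k r ⬝ᵥ ud (j + r) = 0 := by
    intro k hk j hj
    have h0 := hrel (j + k) (by omega)
    rw [state_expand A B N₀ ud xd hdyn k j (by omega), dotProduct_add,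
      Matrix.dotProduct_mulVec, dotProduct_sum'] at h0
    have hsum : ∑ s ∈ Finset.range k, ξ ⬝ᵥ ((A ^ (k - 1 - s)) * B).mulVec (ud (j + s))
        = ∑ s ∈ Finset.range k, w (k - 1 - s) ⬝ᵥ ud (j + s) := by
      refine Finset.sum_congr rfl fun s _ => ?_
      rw [Matrix.dotProduct_mulVec]
    rw [hsum] at h0
    rw [Finset.sum_range_add]
    have e1 : ∑ r ∈ Finset.range k, relK k r ⬝ᵥ ud (j + r)
        = ∑ s ∈ Finset.range k, w (k - 1 - s) ⬝ᵥ ud (j + s) := by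
      refine Finset.sum_congr rfl fun r hr => ?_
      have hr' : r < k := Finset.mem_range.mp hr
      simp only [hrelKdef, if_pos hr']
    have e2 : ∑ l ∈ Finset.range L, relK k (k + l) ⬝ᵥ ud (j + (k + l))
        = ∑ l ∈ Finset.range L, ηf l ⬝ᵥ ud (j + k + l) := by
      refine Finset.sum_congr rfl fun l _ => ?_
      simp only [hrelKdef, if_neg (by omega : ¬ k + l < k)]
      rw [show k + l - k = l by omega, show j + (k + l) = j + k + l by omega]
    rw [e1, e2]
    linarith [h0]
  have hζrel : ∀ k ≤ n, ∀ j, j + n ≤ N₀ - L →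
      ∑ r ∈ Finset.range (n + L), relK k r ⬝ᵥ ud (j + r) = -(v k ⬝ᵥ xd j) := by
    intro k hk j hj
    have h0 := hrelK k hk j (by omega)
    rw [show n + L = (k + L) + (n - k) by omega, Finset.sum_range_add]
    have e : ∑ r ∈ Finset.range (n - k), relK k (k + L + r) ⬝ᵥ ud (j + (k + L + r)) = 0 := by
      refine Finset.sum_eq_zero fun r _ => ?_
      have hz : relK k (k + L + r) = 0 := by
        simp only [hrelKdef, if_neg (by omega : ¬ k + L + r < k)]
        exact hηbig _ (by omega)
      rw [hz, zero_dotProduct]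
    rw [e]
    linarith [h0]
  set ζf : ℕ → Fin m → ℝ :=
    fun r => relK n r + ∑ k ∈ Finset.range n, c k • relK k r with hζfdef
  -- Cayley–Hamilton
  have hch : v n + ∑ k ∈ Finset.range n, c k • v k = 0 := by
    have hdeg : (Matrix.charpoly A).natDegree < n + 1 := by
      rw [Matrix.charpoly_natDegree_eq_dim]
      simp
    have hA : (∑ i ∈ Finset.range (n + 1), c i • A ^ i) = 0 := by
      rw [hcdef, ← Polynomial.aeval_eq_sum_range' hdeg A]
      exact Matrix.aeval_self_charpoly A
    have hcn : c n = 1 := by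
      rw [hcdef]
      have h2 := (Matrix.charpoly_monic A).coeff_natDegree
      rwa [Matrix.charpoly_natDegree_eq_dim, Fintype.card_fin] at h2
    rw [Finset.sum_range_succ, hcn, one_smul] at hA
    have hlin : v n + ∑ k ∈ Finset.range n, c k • v k
        = Matrix.vecMul ξ (A ^ n + ∑ k ∈ Finset.range n, c k • A ^ k) := by
      rw [Matrix.vecMul_add, vecMul_matrix_sum]
      congr 1
      exact Finset.sum_congr rfl fun k _ => (vecMul_matrix_smul ξ (c k) (A ^ k)).symm
    rw [hlin, show A ^ n + ∑ k ∈ Finset.range n, c k • A ^ k = 0 by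
      rw [add_comm]; exact hA, Matrix.vecMul_zero]
  have hζ : ∀ j, j + n ≤ N₀ - L →
      ∑ r ∈ Finset.range (n + L), ζf r ⬝ᵥ ud (j + r) = 0 := by
    intro j hj
    have expand : ∑ r ∈ Finset.range (n + L), ζf r ⬝ᵥ ud (j + r)
        = (∑ r ∈ Finset.range (n + L), relK n r ⬝ᵥ ud (j + r))
          + ∑ k ∈ Finset.range n, c k * ∑ r ∈ Finset.range (n + L), relK k r ⬝ᵥ ud (j + r) := by
      simp only [hζfdef, add_dotProduct, Finset.sum_add_distrib]
      congr 1
      have hpt : ∀ r, (∑ k ∈ Finset.range n, c k • relK k r) ⬝ᵥ ud (j + r)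
          = ∑ k ∈ Finset.range n, c k * (relK k r ⬝ᵥ ud (j + r)) := by
        intro r
        rw [sum_dotProduct' (Finset.range n) (fun k => c k • relK k r)]
        exact Finset.sum_congr rfl fun k _ => by
          rw [smul_dotProduct, smul_eq_mul]
      calc ∑ r ∈ Finset.range (n + L), (∑ k ∈ Finset.range n, c k • relK k r) ⬝ᵥ ud (j + r)
          = ∑ r ∈ Finset.range (n + L), ∑ k ∈ Finset.range n,
              c k * (relK k r ⬝ᵥ ud (j + r)) := Finset.sum_congr rfl fun r _ => hpt r
        _ = ∑ k ∈ Finset.range n, ∑ r ∈ Finset.range (n + L),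
              c k * (relK k r ⬝ᵥ ud (j + r)) := Finset.sum_comm
        _ = ∑ k ∈ Finset.range n, c k * ∑ r ∈ Finset.range (n + L),
              relK k r ⬝ᵥ ud (j + r) := Finset.sum_congr rfl fun k _ =>
                (Finset.mul_sum _ _ _).symm
    rw [expand, hζrel n le_rfl j hj]
    have hcg : ∀ k ∈ Finset.range n,
        c k * ∑ r ∈ Finset.range (n + L), relK k r ⬝ᵥ ud (j + r)
          = -(c k * (v k ⬝ᵥ xd j)) := by
      intro k hk
      rw [hζrel k (le_of_lt (Finset.mem_range.mp hk)) j hj]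
      ring
    rw [Finset.sum_congr rfl hcg]
    have hchdot : v n ⬝ᵥ xd j + ∑ k ∈ Finset.range n, c k * (v k ⬝ᵥ xd j) = 0 := by
      have h2 := congrArg (fun z => z ⬝ᵥ xd j) hch
      simpa [add_dotProduct, sum_dotProduct', smul_dotProduct, smul_eq_mul,
        zero_dotProduct] using h2
    rw [Finset.sum_neg_distrib]
    linarith [hchdot]
  -- the coefficients ζf annihilate the depth-(L+n) Hankel matrix, hence vanish
  have hLIH := (rank_eq_card_iff_li (hankelMat m (L + n) N₀ ud)).mp
    (by rw [show (hankelMat m (L + n) N₀ ud).rank = m * (L + n) from hPE]; simp [mul_comm])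
  have hζ0 : ∀ r, r < L + n → ∀ q, ζf r q = 0 := by
    have hann : ∑ p : Fin (L + n) × Fin m,
        (fun p : Fin (L + n) × Fin m => ζf (p.1 : ℕ) p.2) p • hankelMat m (L + n) N₀ ud p
          = 0 := by
      funext col
      rw [sum_smul_row]
      simp only [hankelMat, Matrix.of_apply, Fintype.sum_prod_type, Pi.zero_apply]
      have : ∀ r : Fin (L + n), ∑ q : Fin m, ζf (r : ℕ) q * ud ((r : ℕ) + (col : ℕ)) q
          = ζf (r : ℕ) ⬝ᵥ ud ((col : ℕ) + (r : ℕ)) := by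
        intro r
        rw [Nat.add_comm (r : ℕ) (col : ℕ)]
        rfl
      calc ∑ r : Fin (L + n), ∑ q : Fin m, ζf (r : ℕ) q * ud ((r : ℕ) + (col : ℕ)) q
          = ∑ r : Fin (L + n), ζf (r : ℕ) ⬝ᵥ ud ((col : ℕ) + (r : ℕ)) :=
            Finset.sum_congr rfl fun r _ => this r
        _ = ∑ r ∈ Finset.range (L + n), ζf r ⬝ᵥ ud ((col : ℕ) + r) :=
            Fin.sum_univ_eq_sum_range (fun r => ζf r ⬝ᵥ ud ((col : ℕ) + r)) (L + n)
        _ = 0 := by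
            rw [show Finset.range (L + n) = Finset.range (n + L) by rw [Nat.add_comm]]
            exact hζ (col : ℕ) (by omega)
    intro r hr q
    exact Fintype.linearIndependent_iff.mp hLIH _ hann (⟨r, hr⟩, q)
  -- the η coefficients vanish
  have hηzero : ∀ t l, L ≤ l + t → ∀ q, ηf l q = 0 := by
    intro t
    induction t with
    | zero =>
      intro l hl q
      rw [hηbig l (by omega)]
      rfl
    | succ t IH =>
      intro l hl q
      by_cases hc : L ≤ l + t
      · exact IH l hc q
      · have h1 := hζ0 (n + l) (by omega) q
        simp only [hζfdef, Pi.add_apply, Finset.sum_apply, Pi.smul_apply, smul_eq_mul] at h1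
        have e0 : relK n (n + l) q = ηf l q := by
          simp only [hrelKdef, if_neg (by omega : ¬ n + l < n)]
          rw [show n + l - n = l by omega]
        have esum : ∑ k ∈ Finset.range n, c k * relK k (n + l) q = 0 := by
          refine Finset.sum_eq_zero fun k hk => ?_
          have hk' : k < n := Finset.mem_range.mp hk
          have e1 : relK k (n + l) q = ηf (n + l - k) q := by
            simp only [hrelKdef, if_neg (by omega : ¬ n + l < k)]
          rw [e1, IH (n + l - k) (by omega) q, mul_zero]
        rw [e0, esum] at h1
        linarith [h1]
  -- the input-power coefficients vanish
  have hw0 : ∀ e, e < n → ∀ q, w e q = 0 := by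
    intro e
    induction e using Nat.strong_induction_on with
    | _ e IH =>
      intro he q
      have h1 := hζ0 (n - 1 - e) (by omega) q
      simp only [hζfdef, Pi.add_apply, Finset.sum_apply, Pi.smul_apply, smul_eq_mul] at h1
      have e0 : relK n (n - 1 - e) q = w e q := by
        simp only [hrelKdef, if_pos (by omega : n - 1 - e < n)]
        rw [show n - 1 - (n - 1 - e) = e by omega]
      have esum : ∑ k ∈ Finset.range n, c k * relK k (n - 1 - e) q = 0 := by
        refine Finset.sum_eq_zero fun k hk => ?_
        have hk' : k < n := Finset.mem_range.mp hk
        by_cases hc : n - 1 - e < k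
        · have e1 : relK k (n - 1 - e) q = w (k - 1 - (n - 1 - e)) q := by
            simp only [hrelKdef, if_pos hc]
          rw [e1, IH (k - 1 - (n - 1 - e)) (by omega) (by omega) q, mul_zero]
        · have e1 : relK k (n - 1 - e) q = ηf (n - 1 - e - k) q := by
            simp only [hrelKdef, if_neg hc]
          rw [e1, hηzero L (n - 1 - e - k) (by omega) q, mul_zero]
      rw [e0, esum] at h1
      linarith [h1]
  -- ξ annihilates the controllability matrix, hence vanishes
  have hLIC := (rank_eq_card_iff_li (ctrbMat A B)).mp
    (by rw [show (ctrbMat A B).rank = n from hctrb]; simp)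
  have hξann : ∑ i, ξ i • ctrbMat A B i = 0 := by
    funext p
    rw [sum_smul_row]
    have h2 := hw0 (p.1 : ℕ) p.1.isLt p.2
    simp only [hwdef, Matrix.vecMul, dotProduct] at h2
    simpa [ctrbMat, Pi.zero_apply] using h2
  have hξ0 := Fintype.linearIndependent_iff.mp hLIC ξ hξann
  -- conclude
  intro i
  match i with
  | Sum.inl a => exact hξ0 a
  | Sum.inr (l, q) =>
    rw [← hηfin l q]
    exact hηzero L (l : ℕ) (by omega) q
end

section
/- The convex hull of a control invariant set of consistent extended states is control invariant: Let (A,B,C,D) define a discrete-time LTI system with (A,C) observable, let T_ini ≥ n, and let U ⊆ ℝ^m be convex. Let Ξ ⊆ ℝ^{(m+p)T_ini} be a set of extended states, each of which is the extended state at time 0 of some trajectory of the system, and suppose Ξ is control invariant for the system under input constraint set U, with the successor extended state again consistent with a system trajectory. Then Conv(Ξ), the convex hull of Ξ, is also a control invariant set for the system under input constraint set U. -/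
open Matrix

/-- `(u, x, y)` is a trajectory of the LTI system `(A, B, C, D)`. -/
def IsTraj {n m p : ℕ} (A : Matrix (Fin n) (Fin n) ℝ) (B : Matrix (Fin n) (Fin m) ℝ)
    (C : Matrix (Fin p) (Fin n) ℝ) (D : Matrix (Fin p) (Fin m) ℝ)
    (u : ℕ → Fin m → ℝ) (x : ℕ → Fin n → ℝ) (y : ℕ → Fin p → ℝ) : Prop :=
  ∀ t : ℕ, x (t + 1) = A.mulVec (x t) + B.mulVec (u t) ∧
    y t = C.mulVec (x t) + D.mulVec (u t)

/-- The extended state `ξ_t = (u(t-T), …, u(t-1), y(t-T), …, y(t-1))`. -/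
def ExtState (m p T : ℕ) (u : ℕ → Fin m → ℝ) (y : ℕ → Fin p → ℝ) (t : ℕ) :
    (Fin T → Fin m → ℝ) × (Fin T → Fin p → ℝ) :=
  (fun i => u (t - T + (i : ℕ)), fun i => y (t - T + (i : ℕ)))

/-- `Ξ` is a control invariant set of extended states for the system `(A, B, C, D)`
under input constraint set `U`: whenever the extended state of a trajectory lies in
`Ξ`, some admissible input keeps the next extended state in `Ξ`. -/
def ControlInvariant {n m p : ℕ} (A : Matrix (Fin n) (Fin n) ℝ)
    (B : Matrix (Fin n) (Fin m) ℝ) (C : Matrix (Fin p) (Fin n) ℝ)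
    (D : Matrix (Fin p) (Fin m) ℝ) (T : ℕ) (U : Set (Fin m → ℝ))
    (Ξ : Set ((Fin T → Fin m → ℝ) × (Fin T → Fin p → ℝ))) : Prop :=
  ∀ u x y, IsTraj A B C D u x y → ∀ t : ℕ, T ≤ t → ExtState m p T u y t ∈ Ξ →
    ∃ v ∈ U, ExtState m p T (Function.update u t v)
      (Function.update y t (C.mulVec (x t) + D.mulVec v)) (t + 1) ∈ Ξ

lemma obs_mulVec_inj {n p : ℕ} (A : Matrix (Fin n) (Fin n) ℝ) (C : Matrix (Fin p) (Fin n) ℝ)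
    (hobs : (obsMat A C n).rank = n) (d : Fin n → ℝ)
    (h : (obsMat A C n).mulVec d = 0) : d = 0 := by
  have hrn := LinearMap.finrank_range_add_finrank_ker (obsMat A C n).mulVecLin
  rw [Module.finrank_pi] at hrn
  simp only [Fintype.card_fin] at hrn
  rw [show Module.finrank ℝ ↥(LinearMap.range (obsMat A C n).mulVecLin) =
    (obsMat A C n).rank from rfl, hobs] at hrn
  have hker : LinearMap.ker (obsMat A C n).mulVecLin = ⊥ :=
    Submodule.finrank_eq_zero.1 (by omega)
  have : d ∈ LinearMap.ker (obsMat A C n).mulVecLin := by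
    simpa [Matrix.mulVecLin] using h
  rwa [hker, Submodule.mem_bot] at this

lemma mulVec_wsum {a b : ℕ} (M : Matrix (Fin a) (Fin b) ℝ) {ι : Type} (s : Finset ι)
    (w : ι → ℝ) (f : ι → Fin b → ℝ) :
    M.mulVec (∑ i ∈ s, w i • f i) = ∑ i ∈ s, w i • M.mulVec (f i) := by
  simp only [← Matrix.mulVecLin_apply, map_sum, _root_.map_smul]

/-- Linear combinations of trajectories are trajectories. -/
lemma isTraj_sum {n m p : ℕ} {A : Matrix (Fin n) (Fin n) ℝ} {B : Matrix (Fin n) (Fin m) ℝ}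
    {C : Matrix (Fin p) (Fin n) ℝ} {D : Matrix (Fin p) (Fin m) ℝ}
    {ι : Type} (s : Finset ι) (w : ι → ℝ)
    (U : ι → ℕ → Fin m → ℝ) (X : ι → ℕ → Fin n → ℝ) (Y : ι → ℕ → Fin p → ℝ)
    (h : ∀ i ∈ s, IsTraj A B C D (U i) (X i) (Y i)) :
    IsTraj A B C D (fun t => ∑ i ∈ s, w i • U i t) (fun t => ∑ i ∈ s, w i • X i t)
      (fun t => ∑ i ∈ s, w i • Y i t) := by
  intro t
  constructor
  · rw [mulVec_wsum, mulVec_wsum, ← Finset.sum_add_distrib]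
    refine Finset.sum_congr rfl fun i hi => ?_
    rw [(h i hi t).1, smul_add]
  · rw [mulVec_wsum, mulVec_wsum, ← Finset.sum_add_distrib]
    refine Finset.sum_congr rfl fun i hi => ?_
    rw [(h i hi t).2, smul_add]

/-- The state of a trajectory is determined by an input/output window of length `T ≥ n`. -/
lemma state_unique {n m p : ℕ} {A : Matrix (Fin n) (Fin n) ℝ} {B : Matrix (Fin n) (Fin m) ℝ}
    {C : Matrix (Fin p) (Fin n) ℝ} {D : Matrix (Fin p) (Fin m) ℝ}
    (hobs : (obsMat A C n).rank = n) {T : ℕ} (hT : n ≤ T)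
    {u x y u' x' y'} (h1 : IsTraj A B C D u x y) (h2 : IsTraj A B C D u' x' y')
    (t0 t0' : ℕ) (hu : ∀ k < T, u (t0 + k) = u' (t0' + k))
    (hy : ∀ k < T, y (t0 + k) = y' (t0' + k)) : x (t0 + T) = x' (t0' + T) := by
  set d : ℕ → Fin n → ℝ := fun k => x (t0 + k) - x' (t0' + k) with hd
  have hstep : ∀ k < T, d (k + 1) = A.mulVec (d k) := by
    intro k hk
    have e1 := (h1 (t0 + k)).1
    have e2 := (h2 (t0' + k)).1
    simp only [hd]
    rw [show t0 + (k+1) = t0 + k + 1 by ring, show t0' + (k+1) = t0' + k + 1 by ring,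
      e1, e2, hu k hk, Matrix.mulVec_sub]
    abel
  have hCd : ∀ k < T, C.mulVec (d k) = 0 := by
    intro k hk
    have e1 := (h1 (t0 + k)).2
    have e2 := (h2 (t0' + k)).2
    simp only [hd]
    rw [Matrix.mulVec_sub, show C *ᵥ x (t0+k) = y (t0+k) - D *ᵥ u (t0+k) by rw [e1]; abel,
      show C *ᵥ x' (t0'+k) = y' (t0'+k) - D *ᵥ u' (t0'+k) by rw [e2]; abel,
      hu k hk, hy k hk]
    abel
  have hpow : ∀ k ≤ T, d k = (A ^ k).mulVec (d 0) := by
    intro k hk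
    induction k with
    | zero => simp
    | succ k ih =>
      rw [hstep k (by omega), ih (by omega), pow_succ', Matrix.mulVec_mulVec]
  have hd0 : d 0 = 0 := by
    apply obs_mulVec_inj A C hobs
    funext ki
    obtain ⟨k, i⟩ := ki
    have h0 : C.mulVec ((A ^ (k : ℕ)).mulVec (d 0)) = 0 := by
      rw [← hpow k (by omega)]
      exact hCd k (by omega)
    have := congrFun h0 i
    rw [Matrix.mulVec_mulVec] at this
    simpa [obsMat, Matrix.mulVec, dotProduct] using this
  have hfin := hpow T le_rfl
  rw [hd0, Matrix.mulVec_zero] at hfin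
  have hfin' : x (t0 + T) - x' (t0' + T) = 0 := hfin
  funext i
  have := congrFun hfin' i
  simp only [Pi.sub_apply, Pi.zero_apply, sub_eq_zero] at this
  exact this

/-- **The convex hull of a control invariant set of consistent extended states is
control invariant.** Suppose `(A, C)` is observable, `T_ini ≥ n`, `U` is convex,
every element of `Ξ` is the extended state of some trajectory of the system, and
`Ξ` is control invariant under `U`. Then `Conv(Ξ)` is also control invariant
under `U`. -/
theorem convexHull_control_invariant {n m p : ℕ}
    (A : Matrix (Fin n) (Fin n) ℝ) (B : Matrix (Fin n) (Fin m) ℝ)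
    (C : Matrix (Fin p) (Fin n) ℝ) (D : Matrix (Fin p) (Fin m) ℝ)
    (hobs : Observable A C) (T : ℕ) (hT : n ≤ T)
    (U : Set (Fin m → ℝ)) (hU : Convex ℝ U)
    (Ξ : Set ((Fin T → Fin m → ℝ) × (Fin T → Fin p → ℝ)))
    (hcons : ∀ ξ ∈ Ξ, ∃ u x y, IsTraj A B C D u x y ∧ ExtState m p T u y T = ξ)
    (hinv : ControlInvariant A B C D T U Ξ) :
    ControlInvariant A B C D T U (convexHull ℝ Ξ) := by
  intro u x y htraj t ht hmem
  rw [convexHull_eq] at hmem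
  obtain ⟨ι, s, w, z, hw0, hw1, hzΞ, hzc⟩ := hmem
  rw [Finset.centerMass_eq_of_sum_1 _ _ hw1] at hzc
  choose! uu xx yy htr hext using hcons
  choose! vv hvU hvmem using hinv
  -- notation for the individual trajectories and inputs
  set V : ι → Fin m → ℝ := fun i => vv (uu (z i)) (xx (z i)) (yy (z i)) T with hV
  have htri : ∀ i ∈ s, IsTraj A B C D (uu (z i)) (xx (z i)) (yy (z i)) :=
    fun i hi => htr (z i) (hzΞ i hi)
  have hexti : ∀ i ∈ s, ExtState m p T (uu (z i)) (yy (z i)) T = z i :=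
    fun i hi => hext (z i) (hzΞ i hi)
  have hmemi : ∀ i ∈ s, ExtState m p T (uu (z i)) (yy (z i)) T ∈ Ξ := by
    intro i hi
    rw [hexti i hi]
    exact hzΞ i hi
  have hVU : ∀ i ∈ s, V i ∈ U := fun i hi =>
    hvU (uu (z i)) (xx (z i)) (yy (z i)) (htri i hi) T le_rfl (hmemi i hi)
  have hnext : ∀ i ∈ s, ExtState m p T (Function.update (uu (z i)) T (V i))
      (Function.update (yy (z i)) T
        (C.mulVec (xx (z i) T) + D.mulVec (V i))) (T + 1) ∈ Ξ :=
    fun i hi => hvmem (uu (z i)) (xx (z i)) (yy (z i)) (htri i hi) T le_rfl (hmemi i hi)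
  -- window component equalities
  have hcomp1 : ∀ k < T, u (t - T + k) = ∑ i ∈ s, w i • uu (z i) k := by
    intro k hk
    have h1 := congrFun (congrArg Prod.fst hzc) ⟨k, hk⟩
    rw [Prod.fst_sum] at h1
    simp only [Finset.sum_apply, Pi.smul_apply, Prod.smul_fst, ExtState] at h1
    rw [← h1]
    refine (Finset.sum_congr rfl fun i hi => ?_).symm
    have h2 := congrFun (congrArg Prod.fst (hexti i hi)) ⟨k, hk⟩
    simp only [ExtState, Nat.sub_self, Nat.zero_add] at h2
    rw [← h2]
  have hcomp2 : ∀ k < T, y (t - T + k) = ∑ i ∈ s, w i • yy (z i) k := by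
    intro k hk
    have h1 := congrFun (congrArg Prod.snd hzc) ⟨k, hk⟩
    rw [Prod.snd_sum] at h1
    simp only [Finset.sum_apply, Pi.smul_apply, Prod.smul_snd, ExtState] at h1
    rw [← h1]
    refine (Finset.sum_congr rfl fun i hi => ?_).symm
    have h2 := congrFun (congrArg Prod.snd (hexti i hi)) ⟨k, hk⟩
    simp only [ExtState, Nat.sub_self, Nat.zero_add] at h2
    rw [← h2]
  -- the current state is the convex combination of the individual states
  have hx : x t = ∑ i ∈ s, w i • xx (z i) T := by
    have hc := isTraj_sum s w (fun i => uu (z i)) (fun i => xx (z i)) (fun i => yy (z i)) htri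
    have := state_unique hobs hT htraj hc (t - T) 0 (fun k hk => by
        simpa using hcomp1 k hk) (fun k hk => by simpa using hcomp2 k hk)
    simpa [Nat.sub_add_cancel ht] using this
  refine ⟨∑ i ∈ s, w i • V i, hU.sum_mem hw0 hw1 hVU, ?_⟩
  have heq : ExtState m p T (Function.update u t (∑ i ∈ s, w i • V i))
      (Function.update y t (C.mulVec (x t) + D.mulVec (∑ i ∈ s, w i • V i))) (t + 1) =
      ∑ i ∈ s, w i • ExtState m p T (Function.update (uu (z i)) T (V i))
        (Function.update (yy (z i)) T
          (C.mulVec (xx (z i) T) + D.mulVec (V i))) (T + 1) := by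
    have hrhs1 : ∀ j : Fin T, (∑ i ∈ s, w i • ExtState m p T
        (Function.update (uu (z i)) T (V i)) (Function.update (yy (z i)) T
          (C.mulVec (xx (z i) T) + D.mulVec (V i))) (T + 1)).1 j =
        ∑ i ∈ s, w i • (Function.update (uu (z i)) T (V i)) (T + 1 - T + (j : ℕ)) := by
      intro j
      rw [Prod.fst_sum]
      simp [ExtState]
    have hrhs2 : ∀ j : Fin T, (∑ i ∈ s, w i • ExtState m p T
        (Function.update (uu (z i)) T (V i)) (Function.update (yy (z i)) T
          (C.mulVec (xx (z i) T) + D.mulVec (V i))) (T + 1)).2 j =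
        ∑ i ∈ s, w i • (Function.update (yy (z i)) T
          (C.mulVec (xx (z i) T) + D.mulVec (V i))) (T + 1 - T + (j : ℕ)) := by
      intro j
      rw [Prod.snd_sum]
      simp [ExtState]
    apply Prod.ext
    · funext j
      rw [hrhs1 j]
      show (Function.update u t (∑ i ∈ s, w i • V i)) (t + 1 - T + (j : ℕ)) = _
      rcases eq_or_ne ((j : ℕ) + 1) T with hj | hj
      · rw [show t + 1 - T + (j : ℕ) = t by omega, Function.update_self]
        refine Finset.sum_congr rfl fun i hi => ?_
        rw [show T + 1 - T + (j : ℕ) = T by omega, Function.update_self]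
      · have hj1 : (j : ℕ) + 1 < T := lt_of_le_of_ne (by omega) hj
        rw [Function.update_of_ne (by omega), show t + 1 - T + (j : ℕ) = t - T + ((j : ℕ) + 1) by omega,
          hcomp1 _ hj1]
        refine Finset.sum_congr rfl fun i hi => ?_
        rw [Function.update_of_ne (by omega), show T + 1 - T + (j : ℕ) = (j : ℕ) + 1 by omega]
    · funext j
      rw [hrhs2 j]
      show (Function.update y t (C.mulVec (x t) + D.mulVec (∑ i ∈ s, w i • V i))) (t + 1 - T + (j : ℕ)) = _
      rcases eq_or_ne ((j : ℕ) + 1) T with hj | hj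
      · rw [show t + 1 - T + (j : ℕ) = t by omega, Function.update_self, hx,
          mulVec_wsum, mulVec_wsum, ← Finset.sum_add_distrib]
        refine Finset.sum_congr rfl fun i hi => ?_
        rw [show T + 1 - T + (j : ℕ) = T by omega, Function.update_self, smul_add]
      · have hj1 : (j : ℕ) + 1 < T := lt_of_le_of_ne (by omega) hj
        rw [Function.update_of_ne (by omega), show t + 1 - T + (j : ℕ) = t - T + ((j : ℕ) + 1) by omega,
          hcomp2 _ hj1]
        refine Finset.sum_congr rfl fun i hi => ?_
        rw [Function.update_of_ne (by omega), show T + 1 - T + (j : ℕ) = (j : ℕ) + 1 by omega]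
  rw [heq]
  exact (convex_convexHull ℝ Ξ).sum_mem hw0 hw1 fun i hi =>
    subset_convexHull ℝ Ξ (hnext i hi)
end
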